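/- Let c ∈ ℝ, let b ∈ L¹(I⁺) with b ≥ 0 a.e. on a compact interval I⁺ = [σ,τ], let g : [0,1] → ℝ be continuous with (g*), let λ > 0, θ ∈ (0,1], r ∈ (0,1), and suppose λ‖b‖_{L¹(I⁺)} ζ(r) e^{|c||I⁺|} |I⁺| < 1/2, where ζ(r) := max_{r/2 ≤ u ≤ r} g(u)/u and |I⁺| = τ−σ. If u is a non-negative solution of u'' + cu' + θλb(x)g(u) = 0 on I⁺ with max_{x∈I⁺} u(x) = r and u'(σ) ≥ 0, then u'(τ) ≥ −θλ‖b‖_{L¹(I⁺)} ζ(r) r e^{|c||I⁺|} and u(τ) ≥ r(1 − θλ‖b‖_{L¹(I⁺)} ζ(r) e^{|c||I⁺|}|I⁺|). -/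

import Mathlib

open MeasureTheory Set Filter Topology

noncomputable section

/-- Carathéodory solution of `u'' + c u' + h(x, u(x)) = 0` on `J`:
`u` is C¹ on `J` with derivative `u'`, which is (locally) absolutely continuous with
a.e.-derivative `u''`, and the equation holds a.e. on `J`. -/
def CaraSol (c : ℝ) (h : ℝ → ℝ → ℝ) (u u' : ℝ → ℝ) (J : Set ℝ) : Prop :=
  (∀ x ∈ J, HasDerivWithinAt u (u' x) J x) ∧
  ContinuousOn u' J ∧
  ∃ u'' : ℝ → ℝ,
    (∀ x ∈ J, ∀ y ∈ J, u' y - u' x = ∫ t in x..y, u'' t) ∧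
    (∀ᵐ x ∂(volume.restrict J), u'' x + c * u' x + h x (u x) = 0)

/-- positive part `a⁺` of a weight -/
def pospart (a : ℝ → ℝ) : ℝ → ℝ := fun x => max (a x) 0

/-- negative part `a⁻` of a weight -/
def negpart (a : ℝ → ℝ) : ℝ → ℝ := fun x => max (-a x) 0

/-- the two-parameter weight `a_{λ,μ} = λ a⁺ - μ a⁻` -/
def awt (a : ℝ → ℝ) (lam mu : ℝ) : ℝ → ℝ := fun x => lam * pospart a x - mu * negpart a x

/-- the critical ratio `μ#(λ) = λ ∫₀^P a⁺ / ∫₀^P a⁻` -/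
def muSharp (a : ℝ → ℝ) (P lam : ℝ) : ℝ :=
  lam * (∫ x in (0:ℝ)..P, pospart a x) / (∫ x in (0:ℝ)..P, negpart a x)

/-- A `P`-periodic locally integrable weight satisfying `(a*)`, with `m` positivity
intervals `I⁺ᵢ = [σ i, τ i]` separated by negativity intervals `I⁻ᵢ = [τ i, σ (i+1)]`. -/
structure AStar (P : ℝ) (m : ℕ) (a : ℝ → ℝ) (σ τ : ℕ → ℝ) : Prop where
  hP : 0 < P
  hm : 1 ≤ m
  periodic : ∀ x, a (x + P) = a x
  locint : LocallyIntegrable a volume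
  σ_one : σ 1 = 0
  σ_last : σ (m + 1) = P
  lt_στ : ∀ i ∈ Finset.Icc 1 m, σ i < τ i
  lt_τσ : ∀ i ∈ Finset.Icc 1 m, τ i < σ (i + 1)
  pos_ae : ∀ i ∈ Finset.Icc 1 m, ∀ᵐ x ∂(volume.restrict (Icc (σ i) (τ i))), 0 ≤ a x
  pos_ne : ∀ i ∈ Finset.Icc 1 m, ¬ (∀ᵐ x ∂(volume.restrict (Icc (σ i) (τ i))), a x = 0)
  neg_ae : ∀ i ∈ Finset.Icc 1 m, ∀ᵐ x ∂(volume.restrict (Icc (τ i) (σ (i + 1)))), a x ≤ 0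
  neg_ne : ∀ i ∈ Finset.Icc 1 m, ¬ (∀ᵐ x ∂(volume.restrict (Icc (τ i) (σ (i + 1)))), a x = 0)

/-- condition `(g*)` -/
def Gstar (g : ℝ → ℝ) : Prop := g 0 = 0 ∧ g 1 = 0 ∧ ∀ u ∈ Ioo (0:ℝ) 1, 0 < g u

/-- condition `(g₀)`: `g(u)/u → 0` as `u → 0⁺` -/
def Gzero (g : ℝ → ℝ) : Prop := Tendsto (fun u => g u / u) (𝓝[>] (0:ℝ)) (𝓝 0)

/-- condition `(g₁)`: `limsup_{u→1⁻} g(u)/(1-u) < ∞` -/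
def Gone (g : ℝ → ℝ) : Prop := ∃ K : ℝ, ∀ᶠ u in 𝓝[<] (1:ℝ), g u / (1 - u) ≤ K

/-- `P`-periodic Carathéodory solution of `u'' + c u' + w(x) g(u) = 0` on `ℝ`. -/
def PerSol (c : ℝ) (w g u u' : ℝ → ℝ) (P : ℝ) : Prop :=
  CaraSol c (fun x v => w x * g v) u u' univ ∧ ∀ x, u (x + P) = u x
open intervalIntegral

lemma exp_integral (c a b : ℝ) :
    ∫ s in a..b, c * Real.exp (c * s) = Real.exp (c * b) - Real.exp (c * a) := by
  have hd : ∀ s ∈ uIcc a b, HasDerivAt (fun t => Real.exp (c * t)) (c * Real.exp (c * s)) s := by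
    intro s _
    simpa [mul_comm] using ((hasDerivAt_id s).const_mul c).exp
  have hc : ContinuousOn (fun s => c * Real.exp (c * s)) (uIcc a b) :=
    (continuous_const.mul (Real.continuous_exp.comp (continuous_const.mul continuous_id))).continuousOn
  exact integral_eq_sub_of_hasDerivAt hd hc.intervalIntegrable

lemma swap_lemma {c x y : ℝ} (hxy : x ≤ y) {h : ℝ → ℝ}
    (hh : IntegrableOn h (Ioc x y)) :
    ∫ s in Ioc x y, c * Real.exp (c * s) * (∫ t in Ioc x s, h t)
      = ∫ t in Ioc x y, (Real.exp (c * y) - Real.exp (c * t)) * h t := by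
  set μ := volume.restrict (Ioc x y) with hμ
  have hexpc : Continuous (fun s : ℝ => c * Real.exp (c * s)) :=
    continuous_const.mul (Real.continuous_exp.comp (continuous_const.mul continuous_id))
  have hmeasS : MeasurableSet {q : ℝ × ℝ | q.2 ≤ q.1} :=
    measurableSet_le measurable_snd measurable_fst
  set F : ℝ × ℝ → ℝ :=
    ({q : ℝ × ℝ | q.2 ≤ q.1}).indicator (fun q => c * Real.exp (c * q.1) * h q.2) with hF
  have hexpint : Integrable (fun s : ℝ => c * Real.exp (c * s)) μ := by
    rw [hμ]
    exact (hexpc.continuousOn (s := Icc x y)).integrableOn_Icc.mono_set Ioc_subset_Icc_self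
  have hint_base : Integrable (fun q : ℝ × ℝ => (c * Real.exp (c * q.1)) * h q.2) (μ.prod μ) :=
    hexpint.mul_prod hh
  have hint : Integrable F (μ.prod μ) := hint_base.indicator hmeasS
  have hswap := integral_integral_swap (f := fun s t => F (s, t)) (μ := μ) (ν := μ)
      (by exact hint)
  have lhs_eq : ∫ s in Ioc x y, c * Real.exp (c * s) * (∫ t in Ioc x s, h t)
      = ∫ s, (∫ t, F (s, t) ∂μ) ∂μ := by
    rw [hμ]
    apply setIntegral_congr_fun measurableSet_Ioc
    intro s hs
    show c * Real.exp (c * s) * (∫ t in Ioc x s, h t) = ∫ t in Ioc x y, F (s, t)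
    have hfun : (fun t => F (s, t)) = (Iic s).indicator (fun t => c * Real.exp (c * s) * h t) := by
      funext t
      simp [hF, Set.indicator_apply, Set.mem_setOf_eq, Set.mem_Iic]
    rw [hfun, setIntegral_indicator measurableSet_Iic, Set.Ioc_inter_Iic,
      min_eq_right hs.2, MeasureTheory.integral_const_mul]
  have rhs_eq : ∫ t, (∫ s, F (s, t) ∂μ) ∂μ
      = ∫ t in Ioc x y, (Real.exp (c * y) - Real.exp (c * t)) * h t := by
    rw [hμ]
    apply setIntegral_congr_fun measurableSet_Ioc
    intro t ht
    show (∫ s in Ioc x y, F (s, t)) = (Real.exp (c * y) - Real.exp (c * t)) * h t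
    have hfun : (fun s => F (s, t)) = (Ici t).indicator (fun s => c * Real.exp (c * s) * h t) := by
      funext s
      simp [hF, Set.indicator_apply, Set.mem_setOf_eq, Set.mem_Ici]
    have hset : Ioc x y ∩ Ici t = Icc t y := by
      ext s
      simp only [Set.mem_inter_iff, Set.mem_Ioc, Set.mem_Ici, Set.mem_Icc]
      constructor
      · rintro ⟨⟨_, hsy⟩, hts⟩; exact ⟨hts, hsy⟩
      · rintro ⟨hts, hsy⟩; exact ⟨⟨lt_of_lt_of_le ht.1 hts, hsy⟩, hts⟩
    rw [hfun, setIntegral_indicator measurableSet_Ici, hset, MeasureTheory.integral_mul_const,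
      integral_Icc_eq_integral_Ioc, ← integral_of_le ht.2, exp_integral]
  rw [lhs_eq, hswap, rhs_eq]

lemma parts_exp {c x y : ℝ} (hxy : x ≤ y) {f h : ℝ → ℝ}
    (hf : ContinuousOn f (Icc x y))
    (hh : IntegrableOn h (Icc x y))
    (hfh : ∀ z ∈ Icc x y, f z - f x = ∫ t in x..z, h t) :
    Real.exp (c * y) * f y - Real.exp (c * x) * f x
      = ∫ s in x..y, Real.exp (c * s) * (h s + c * f s) := by
  have huIcc : uIcc x y = Icc x y := uIcc_of_le hxy
  have hexpc : Continuous (fun s : ℝ => Real.exp (c * s)) :=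
    Real.continuous_exp.comp (continuous_const.mul continuous_id)
  have hhIoc : IntegrableOn h (Ioc x y) := hh.mono_set Ioc_subset_Icc_self
  have hhI : IntervalIntegrable h volume x y := by
    rw [intervalIntegrable_iff, uIoc_of_le hxy]; exact hhIoc
  have hEh : IntervalIntegrable (fun s => Real.exp (c * s) * h s) volume x y := by
    rw [intervalIntegrable_iff, uIoc_of_le hxy]
    refine hhIoc.bdd_mul (c := Real.exp (|c| * max |x| |y|))
      (hexpc.aestronglyMeasurable.restrict) ?_
    filter_upwards [ae_restrict_mem measurableSet_Ioc] with s hs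
    rw [Real.norm_eq_abs, Real.abs_exp]
    apply Real.exp_le_exp.mpr
    have h1 : |s| ≤ max |x| |y| := by
      rcases abs_le.mp (le_refl |s|) with _
      apply abs_le.mpr
      constructor
      · calc -(max |x| |y|) ≤ -|x| := by simp [neg_le_neg, le_max_left]
          _ ≤ x := neg_abs_le x
          _ ≤ s := le_of_lt hs.1
      · calc s ≤ y := hs.2
          _ ≤ |y| := le_abs_self y
          _ ≤ max |x| |y| := le_max_right _ _
    calc c * s ≤ |c * s| := le_abs_self _
      _ = |c| * |s| := abs_mul c s
      _ ≤ |c| * max |x| |y| := by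
          exact mul_le_mul_of_nonneg_left h1 (abs_nonneg c)
  have hfu : ContinuousOn f (uIcc x y) := huIcc ▸ hf
  have hcf : IntervalIntegrable (fun s => c * Real.exp (c * s) * f s) volume x y :=
    (((continuous_const.mul hexpc).continuousOn).mul hfu).intervalIntegrable
  have hce : IntervalIntegrable (fun s => c * Real.exp (c * s) * f x) volume x y :=
    ((continuous_const.mul hexpc).mul continuous_const).continuousOn.intervalIntegrable
  have hH : ContinuousOn (fun s => ∫ t in x..s, h t) (uIcc x y) :=
    continuousOn_primitive_interval (huIcc ▸ hh)
  have hcH : IntervalIntegrable (fun s => c * Real.exp (c * s) * (∫ t in x..s, h t))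
      volume x y :=
    (((continuous_const.mul hexpc).continuousOn).mul hH).intervalIntegrable
  have hsplit : ∫ s in x..y, Real.exp (c * s) * (h s + c * f s)
      = (∫ s in x..y, Real.exp (c * s) * h s) + ∫ s in x..y, c * Real.exp (c * s) * f s := by
    rw [← integral_add hEh hcf]
    apply integral_congr
    intro s _
    ring
  have hT2 : ∫ s in x..y, c * Real.exp (c * s) * f s
      = (∫ s in x..y, c * Real.exp (c * s) * f x)
        + ∫ s in x..y, c * Real.exp (c * s) * (∫ t in x..s, h t) := by
    rw [← integral_add hce hcH]
    apply integral_congr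
    intro s hs
    rw [huIcc] at hs
    have := hfh s hs
    simp only []
    rw [← this]
    ring
  have e1 : ∫ s in x..y, c * Real.exp (c * s) * f x
      = (Real.exp (c * y) - Real.exp (c * x)) * f x := by
    rw [intervalIntegral.integral_mul_const, exp_integral]
  have e2 : ∫ s in x..y, c * Real.exp (c * s) * (∫ t in x..s, h t)
      = Real.exp (c * y) * (f y - f x) - ∫ s in x..y, Real.exp (c * s) * h s := by
    rw [integral_of_le hxy]
    rw [setIntegral_congr_fun measurableSet_Ioc
      (g := fun s => c * Real.exp (c * s) * (∫ t in Ioc x s, h t))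
      (fun s hs => by simp only []; rw [integral_of_le (le_of_lt hs.1)])]
    rw [swap_lemma hxy hhIoc]
    have hsub : ∫ t in Ioc x y, (Real.exp (c * y) - Real.exp (c * t)) * h t
        = (∫ t in Ioc x y, Real.exp (c * y) * h t) - ∫ t in Ioc x y, Real.exp (c * t) * h t := by
      rw [← integral_sub (hhIoc.const_mul _) ?_]
      · apply setIntegral_congr_fun measurableSet_Ioc
        intro t _
        simp only []
        ring
      · rw [intervalIntegrable_iff, uIoc_of_le hxy] at hEh
        exact hEh
    rw [hsub, MeasureTheory.integral_const_mul]
    have : ∫ t in Ioc x y, h t = f y - f x := by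
      rw [← integral_of_le hxy]
      exact (hfh y (right_mem_Icc.mpr hxy)).symm
    rw [this, integral_of_le hxy]
  rw [hsplit, hT2, e1, e2]
  ring


/-- Step 1 of Lemma 2.5: the estimates (eq-4.2tau), (eq-4.3tau) on a positivity
interval `I⁺ = [σ,τ]`, with `ζ(r) = max_{r/2 ≤ v ≤ r} g(v)/v`. -/
theorem statement10 (c σ τ lam θ r : ℝ) (hστ : σ < τ) (b : ℝ → ℝ)
    (hb : IntegrableOn b (Icc σ τ))
    (hbnn : ∀ᵐ x ∂(volume.restrict (Icc σ τ)), 0 ≤ b x)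
    (g : ℝ → ℝ) (hg : ContinuousOn g (Icc 0 1)) (hgs : Gstar g)
    (hlam : 0 < lam) (hθ : θ ∈ Ioc (0:ℝ) 1) (hr : r ∈ Ioo (0:ℝ) 1)
    (hsmall : lam * (∫ x in Icc σ τ, |b x|) *
        sSup ((fun v => g v / v) '' Icc (r / 2) r) *
        Real.exp (|c| * (τ - σ)) * (τ - σ) < 1 / 2)
    (u u' : ℝ → ℝ)
    (hsol : CaraSol c (fun x v => θ * lam * b x * g v) u u' (Icc σ τ))
    (hnn : ∀ x ∈ Icc σ τ, 0 ≤ u x)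
    (hmax : sSup (u '' Icc σ τ) = r)
    (hder : 0 ≤ u' σ) :
    u' τ ≥ -(θ * lam * (∫ x in Icc σ τ, |b x|) *
        sSup ((fun v => g v / v) '' Icc (r / 2) r) * r * Real.exp (|c| * (τ - σ))) ∧
    u τ ≥ r * (1 - θ * lam * (∫ x in Icc σ τ, |b x|) *
        sSup ((fun v => g v / v) '' Icc (r / 2) r) *
        Real.exp (|c| * (τ - σ)) * (τ - σ)) := by
  obtain ⟨hderiv, hcontu', u'', hu''id, hae⟩ := hsol
  set Z := sSup ((fun v => g v / v) '' Icc (r / 2) r) with hZdef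
  set B := ∫ x in Icc σ τ, |b x| with hBdef
  set E := Real.exp (|c| * (τ - σ)) with hEdef
  set K := θ * lam * B * Z * r * E with hKdef
  obtain ⟨hθ0, hθ1⟩ := hθ
  obtain ⟨hr0, hr1⟩ := hr
  have hrhalf0 : 0 < r / 2 := by linarith
  have hIccsub : Icc (r / 2) r ⊆ Icc (0:ℝ) 1 := fun v hv =>
    ⟨le_trans hrhalf0.le hv.1, le_trans hv.2 hr1.le⟩
  have hgq_cont : ContinuousOn (fun v => g v / v) (Icc (r / 2) r) :=
    (hg.mono hIccsub).div continuousOn_id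
      (fun v hv => ne_of_gt (lt_of_lt_of_le hrhalf0 hv.1))
  have hrmem : r ∈ Icc (r / 2) r := ⟨by linarith, le_refl r⟩
  have hbddZ : BddAbove ((fun v => g v / v) '' Icc (r / 2) r) :=
    (isCompact_Icc.image_of_continuousOn hgq_cont).bddAbove
  have hZle : ∀ v ∈ Icc (r / 2) r, g v / v ≤ Z :=
    fun v hv => le_csSup hbddZ (mem_image_of_mem _ hv)
  have hg0 : ∀ v ∈ Icc (0:ℝ) 1, 0 ≤ g v := by
    intro v hv
    rcases eq_or_lt_of_le hv.1 with h0 | h0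
    · rw [← h0, hgs.1]
    rcases eq_or_lt_of_le hv.2 with h1 | h1
    · rw [h1, hgs.2.1]
    exact (hgs.2.2 v ⟨h0, h1⟩).le
  have hZ0 : 0 ≤ Z :=
    le_trans (div_nonneg (hg0 r ⟨hr0.le, hr1.le⟩) hr0.le) (hZle r hrmem)
  have hB0 : 0 ≤ B := setIntegral_nonneg measurableSet_Icc (fun x _ => abs_nonneg _)
  have hE0 : 0 < E := Real.exp_pos _
  have hK0 : 0 ≤ K := by
    rw [hKdef]
    have := hlam.le
    have := hθ0.le
    have := hr0.le
    positivity
  have hKD : K * (τ - σ) < r / 2 := by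
    have hX0 : 0 ≤ lam * B * Z * E * (τ - σ) := by
      have := hlam.le
      have h1 : (0:ℝ) ≤ τ - σ := by linarith
      positivity
    have h1 : K * (τ - σ) = θ * (lam * B * Z * E * (τ - σ) * r) := by rw [hKdef]; ring
    have h2 : θ * (lam * B * Z * E * (τ - σ) * r) ≤ 1 * (lam * B * Z * E * (τ - σ) * r) :=
      mul_le_mul_of_nonneg_right hθ1 (mul_nonneg hX0 hr0.le)
    have h3 : lam * B * Z * E * (τ - σ) * r < (1 / 2) * r :=
      mul_lt_mul_of_pos_right hsmall hr0
    linarith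
  -- continuity of u and basic bounds
  have hcontu : ContinuousOn u (Icc σ τ) := fun z hz => (hderiv z hz).continuousWithinAt
  obtain ⟨xs, hxs, hmaxon⟩ :=
    isCompact_Icc.exists_isMaxOn (nonempty_Icc.mpr hστ.le) hcontu
  have hmaxon' : ∀ z ∈ Icc σ τ, u z ≤ u xs := isMaxOn_iff.mp hmaxon
  have huxs : u xs = r := by
    rw [← hmax]
    apply le_antisymm
    · exact le_csSup (isCompact_Icc.image_of_continuousOn hcontu).bddAbove
        (mem_image_of_mem u hxs)
    · apply csSup_le ((nonempty_Icc.mpr hστ.le).image u)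
      rintro w ⟨z, hz, rfl⟩
      exact hmaxon' z hz
  have hub : ∀ z ∈ Icc σ τ, u z ≤ r := fun z hz => huxs ▸ hmaxon' z hz
  have hu01 : ∀ z ∈ Icc σ τ, u z ∈ Icc (0:ℝ) 1 :=
    fun z hz => ⟨hnn z hz, le_trans (hub z hz) hr1.le⟩
  have hgu_cont : ContinuousOn (fun s => g (u s)) (Icc σ τ) :=
    hg.comp hcontu (fun z hz => hu01 z hz)
  have hgu0 : ∀ z ∈ Icc σ τ, 0 ≤ g (u z) := fun z hz => hg0 _ (hu01 z hz)
  obtain ⟨Cg, hCg⟩ := isCompact_Icc.exists_bound_of_continuousOn hg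
  have hint_bgu : IntegrableOn (fun s => b s * g (u s)) (Icc σ τ) := by
    have h1 : Integrable (fun s => g (u s) * b s) (volume.restrict (Icc σ τ)) := by
      refine hb.bdd_mul (c := Cg) (hgu_cont.aestronglyMeasurable measurableSet_Icc) ?_
      filter_upwards [ae_restrict_mem measurableSet_Icc] with s hs
      exact hCg _ (hu01 s hs)
    have : (fun s => b s * g (u s)) = fun s => g (u s) * b s := funext fun s => mul_comm _ _
    rw [this]
    exact h1
  have hu'int : IntegrableOn u' (Icc σ τ) := hcontu'.integrableOn_Icc
  set h : ℝ → ℝ := fun s => -(c * u' s + θ * lam * (b s * g (u s))) with hhdef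
  have hh_int : IntegrableOn h (Icc σ τ) := by
    apply Integrable.neg
    exact (hu'int.const_mul c).add (hint_bgu.const_mul (θ * lam))
  -- the a.e. ODE rewritten for h
  have hfh : ∀ x ∈ Icc σ τ, ∀ z ∈ Icc σ τ, x ≤ z → u' z - u' x = ∫ t in x..z, h t := by
    intro x hx z hz hxz
    rw [hu''id x hx z hz]
    rw [integral_of_le hxz, integral_of_le hxz]
    apply MeasureTheory.integral_congr_ae
    have hsub : Ioc x z ⊆ Icc σ τ :=
      fun t ht => ⟨le_trans hx.1 ht.1.le, le_trans ht.2 hz.2⟩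
    have := ae_restrict_of_ae_restrict_of_subset hsub hae
    filter_upwards [this] with t ht
    rw [hhdef]
    simp only []
    linarith
  -- key identity
  have hID : ∀ x ∈ Icc σ τ, ∀ z ∈ Icc σ τ, x ≤ z →
      Real.exp (c * z) * u' z - Real.exp (c * x) * u' x
        = -(θ * lam) * ∫ s in x..z, Real.exp (c * s) * (b s * g (u s)) := by
    intro x hx z hz hxz
    have hIccsub2 : Icc x z ⊆ Icc σ τ := Icc_subset_Icc hx.1 hz.2
    have hPE := parts_exp (c := c) hxz (hcontu'.mono hIccsub2) (hh_int.mono_set hIccsub2)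
      (fun w hw => hfh x hx w (hIccsub2 hw) hw.1)
    rw [hPE, ← intervalIntegral.integral_const_mul]
    apply integral_congr
    intro s _
    rw [hhdef]
    simp only []
    ring
  -- derivative at the max point is nonnegative
  have hu'xs : 0 ≤ u' xs := by
    rcases eq_or_lt_of_le hxs.1 with hσxs | hσxs
    · rw [← hσxs]; exact hder
    · have hd := hderiv xs hxs
      rw [hasDerivWithinAt_iff_tendsto_slope] at hd
      have hsub : Ioo σ xs ⊆ Icc σ τ \ {xs} := by
        intro t ht
        exact ⟨⟨ht.1.le, le_trans ht.2.le hxs.2⟩, ne_of_lt ht.2⟩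
      have hne : (𝓝[Ioo σ xs] xs).NeBot := right_nhdsWithin_Ioo_neBot hσxs
      have hd' : Tendsto (slope u xs) (𝓝[Ioo σ xs] xs) (𝓝 (u' xs)) :=
        hd.mono_left (nhdsWithin_mono xs hsub)
      refine ge_of_tendsto hd' ?_
      apply eventually_nhdsWithin_of_forall
      intro t ht
      rw [slope_def_field]
      apply div_nonneg_iff.mpr
      right
      constructor
      · have : u t ≤ u xs := hmaxon' t ⟨ht.1.le, le_trans ht.2.le hxs.2⟩
        linarith
      · linarith [ht.2]
  have hae_ne : ∀ z : ℝ, ∀ S : Set ℝ, ∀ᵐ s ∂volume.restrict S, s ≠ z := by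
    intro z S
    rw [ae_iff]
    have h1 : {x : ℝ | ¬ x ≠ z} = {z} := by ext x; simp
    rw [h1, Measure.restrict_apply (measurableSet_singleton z)]
    exact measure_mono_null inter_subset_left Real.volume_singleton
  -- the main pointwise estimate
  have hEST : ∀ z ∈ Icc σ τ, xs ≤ z → (∀ t ∈ Ico xs z, r / 2 ≤ u t) → -K ≤ u' z := by
    intro z hz hxsz hhalf
    have hM0 : 0 ≤ Real.exp (c * z) * E * (Z * r) := by positivity
    have hsubIoc : Ioc xs z ⊆ Icc σ τ := fun t ht => ⟨le_trans hxs.1 ht.1.le, le_trans ht.2 hz.2⟩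
    have haebound : ∀ᵐ s ∂volume.restrict (Ioc xs z),
        Real.exp (c * s) * (b s * g (u s)) ≤ Real.exp (c * z) * E * (Z * r) * b s := by
      have hbnn2 : ∀ᵐ s ∂volume.restrict (Ioc xs z), 0 ≤ b s :=
        ae_restrict_of_ae_restrict_of_subset hsubIoc hbnn
      filter_upwards [ae_restrict_mem measurableSet_Ioc, hae_ne z (Ioc xs z), hbnn2]
        with s hs hsz hbs
      have hsIcc : s ∈ Icc σ τ := hsubIoc hs
      have hsIco : s ∈ Ico xs z := ⟨hs.1.le, lt_of_le_of_ne hs.2 hsz⟩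
      have hus : u s ∈ Icc (r / 2) r := ⟨hhalf s hsIco, hub s hsIcc⟩
      have hgus : g (u s) ≤ Z * r := by
        have h1 : g (u s) / u s ≤ Z := hZle _ hus
        have hus0 : 0 < u s := lt_of_lt_of_le hrhalf0 hus.1
        have h2 : g (u s) ≤ Z * u s := (div_le_iff₀ hus0).mp h1
        calc g (u s) ≤ Z * u s := h2
          _ ≤ Z * r := mul_le_mul_of_nonneg_left hus.2 hZ0
      have hexps : Real.exp (c * s) ≤ Real.exp (c * z) * E := by
        rw [hEdef, ← Real.exp_add]
        apply Real.exp_le_exp.mpr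
        have habs : |c * (s - z)| ≤ |c| * (τ - σ) := by
          rw [abs_mul]
          apply mul_le_mul_of_nonneg_left _ (abs_nonneg c)
          apply abs_le.mpr
          constructor
          · have := hsIcc.1; have := hz.2; linarith
          · have := hsIcc.2; have := hz.1; linarith
        have h3 : c * (s - z) ≤ |c| * (τ - σ) := le_trans (le_abs_self _) habs
        linarith
      have hgus0 : 0 ≤ g (u s) := hgu0 s hsIcc
      calc Real.exp (c * s) * (b s * g (u s))
          ≤ (Real.exp (c * z) * E) * (b s * g (u s)) :=
            mul_le_mul_of_nonneg_right hexps (mul_nonneg hbs hgus0)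
        _ ≤ (Real.exp (c * z) * E) * (b s * (Z * r)) := by
            apply mul_le_mul_of_nonneg_left _ (by positivity)
            exact mul_le_mul_of_nonneg_left hgus hbs
        _ = Real.exp (c * z) * E * (Z * r) * b s := by ring
    have hint1 : IntegrableOn (fun s => Real.exp (c * s) * (b s * g (u s))) (Ioc xs z) := by
      refine (hint_bgu.mono_set hsubIoc).bdd_mul
        (c := Real.exp (|c| * (|σ| + |τ|)))
        ((Real.continuous_exp.comp (continuous_const.mul continuous_id)).aestronglyMeasurable.restrict) ?_
      filter_upwards [ae_restrict_mem measurableSet_Ioc] with s hs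
      have hsIcc : s ∈ Icc σ τ := hsubIoc hs
      rw [Real.norm_eq_abs, Real.abs_exp]
      apply Real.exp_le_exp.mpr
      have h1 : |s| ≤ |σ| + |τ| := by
        apply abs_le.mpr
        constructor
        · have h2 := neg_abs_le σ
          have := hsIcc.1
          have := abs_nonneg τ
          linarith
        · have h2 := le_abs_self τ
          have := hsIcc.2
          have := abs_nonneg σ
          linarith
      calc c * s ≤ |c * s| := le_abs_self _
        _ = |c| * |s| := abs_mul c s
        _ ≤ |c| * (|σ| + |τ|) := mul_le_mul_of_nonneg_left h1 (abs_nonneg c)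
    have hint2 : IntegrableOn (fun s => Real.exp (c * z) * E * (Z * r) * b s) (Ioc xs z) :=
      (hb.mono_set hsubIoc).const_mul _
    have hJle : (∫ s in xs..z, Real.exp (c * s) * (b s * g (u s)))
        ≤ Real.exp (c * z) * E * (Z * r) * B := by
      rw [integral_of_le hxsz]
      calc ∫ s in Ioc xs z, Real.exp (c * s) * (b s * g (u s))
          ≤ ∫ s in Ioc xs z, Real.exp (c * z) * E * (Z * r) * b s :=
            integral_mono_ae hint1 hint2 haebound
        _ = Real.exp (c * z) * E * (Z * r) * ∫ s in Ioc xs z, b s := MeasureTheory.integral_const_mul _ _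
        _ ≤ Real.exp (c * z) * E * (Z * r) * B := by
            apply mul_le_mul_of_nonneg_left _ hM0
            have hb1 : IntegrableOn (fun s => |b s|) (Ioc xs z) :=
              MeasureTheory.IntegrableOn.mono_set hb.abs hsubIoc
            have h8 : ∫ s in Ioc xs z, b s ≤ ∫ s in Ioc xs z, |b s| :=
              integral_mono_ae (hb.mono_set hsubIoc) hb1
                (Eventually.of_forall fun s => le_abs_self _)
            have h9 : (∫ s in Ioc xs z, |b s|) ≤ B := by
              rw [hBdef]
              exact setIntegral_mono_set hb.abs
                (Eventually.of_forall fun s => abs_nonneg _)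
                (HasSubset.Subset.eventuallyLE hsubIoc)
            linarith
    have hIDz := hID xs hxs z hz hxsz
    have hexs : 0 ≤ Real.exp (c * xs) * u' xs := mul_nonneg (Real.exp_pos _).le hu'xs
    have h6 : θ * lam * (∫ s in xs..z, Real.exp (c * s) * (b s * g (u s)))
        ≤ θ * lam * (Real.exp (c * z) * E * (Z * r) * B) :=
      mul_le_mul_of_nonneg_left hJle (mul_nonneg hθ0.le hlam.le)
    have h7 : Real.exp (c * z) * (-K) = -(θ * lam) * (Real.exp (c * z) * E * (Z * r) * B) := by
      rw [hKdef]; ring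
    have h5 : Real.exp (c * z) * (-K) ≤ Real.exp (c * z) * u' z := by
      rw [h7]
      nlinarith [hIDz, hexs, h6]
    exact (mul_le_mul_iff_right₀ (Real.exp_pos (c * z))).mp h5
  -- fundamental theorem of calculus for u
  have hftc : ∀ z ∈ Icc σ τ, xs ≤ z → u z - u xs = ∫ s in xs..z, u' s := by
    intro z hz hxsz
    have hIccsub2 : Icc xs z ⊆ Icc σ τ := Icc_subset_Icc hxs.1 hz.2
    have hci : ContinuousOn u' (uIcc xs z) := (uIcc_of_le hxsz).symm ▸ hcontu'.mono hIccsub2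
    refine (integral_eq_sub_of_hasDeriv_right_of_le hxsz (hcontu.mono hIccsub2) ?_
      hci.intervalIntegrable).symm
    intro w hw
    have hwI : w ∈ Icc σ τ := ⟨le_trans hxs.1 hw.1.le, le_trans hw.2.le hz.2⟩
    have hmem : Icc σ τ ∈ 𝓝 w :=
      Icc_mem_nhds (lt_of_le_of_lt hxs.1 hw.1) (lt_of_lt_of_le hw.2 hz.2)
    exact ((hderiv w hwI).hasDerivAt hmem).hasDerivWithinAt
  -- claim: u stays above r/2 on [xs, τ]
  have hclaim : ∀ z ∈ Icc xs τ, r / 2 < u z := by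
    by_contra hcon
    push_neg at hcon
    obtain ⟨z1, hz1, hz1le⟩ := hcon
    set A := Icc xs τ ∩ u ⁻¹' Iic (r / 2) with hAdef
    have hsubA : Icc xs τ ⊆ Icc σ τ := Icc_subset_Icc hxs.1 le_rfl
    have hclosed : IsClosed A :=
      ContinuousOn.preimage_isClosed_of_isClosed (hcontu.mono hsubA) isClosed_Icc isClosed_Iic
    have hAne : A.Nonempty := ⟨z1, hz1, hz1le⟩
    have hAbdd : BddBelow A := ⟨xs, fun t ht => ht.1.1⟩
    set y0 := sInf A with hy0def
    have hy0A : y0 ∈ A := hclosed.csInf_mem hAne hAbdd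
    have hy0Icc : y0 ∈ Icc σ τ := hsubA hy0A.1
    have hxsy0 : xs ≤ y0 := hy0A.1.1
    have hlow : ∀ t ∈ Ico xs y0, r / 2 ≤ u t := by
      intro t ht
      by_contra hlt
      push_neg at hlt
      have htA : t ∈ A := ⟨⟨ht.1, le_trans ht.2.le hy0A.1.2⟩, hlt.le⟩
      exact absurd (csInf_le hAbdd htA) (not_le.mpr ht.2)
    have hder_ae : ∀ᵐ s ∂volume.restrict (Ioc xs y0), -K ≤ u' s := by
      filter_upwards [ae_restrict_mem measurableSet_Ioc, hae_ne y0 (Ioc xs y0)] with s hs hsne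
      have hsy0 : s < y0 := lt_of_le_of_ne hs.2 hsne
      have hsIcc : s ∈ Icc σ τ := ⟨le_trans hxs.1 hs.1.le, le_trans hs.2 hy0Icc.2⟩
      apply hEST s hsIcc hs.1.le
      intro t ht
      exact hlow t ⟨ht.1, lt_trans ht.2 hsy0⟩
    have hintle : -K * (y0 - xs) ≤ ∫ s in xs..y0, u' s := by
      rw [integral_of_le hxsy0]
      have h1 : ∫ _ in Ioc xs y0, (-K) ≤ ∫ s in Ioc xs y0, u' s :=
        integral_mono_ae (integrable_const _)
          (hu'int.mono_set (fun t ht => ⟨le_trans hxs.1 ht.1.le, le_trans ht.2 hy0Icc.2⟩))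
          hder_ae
      rw [setIntegral_const, Real.volume_real_Ioc_of_le hxsy0, smul_eq_mul] at h1
      linarith
    have huy0 : u y0 - r = ∫ s in xs..y0, u' s := by
      rw [← huxs]
      exact hftc y0 hy0Icc hxsy0
    have hylexs : y0 - xs ≤ τ - σ := by
      have := hy0Icc.2; have := hxs.1; linarith
    have hKy : K * (y0 - xs) ≤ K * (τ - σ) := mul_le_mul_of_nonneg_left hylexs hK0
    have hy0gt : r / 2 < u y0 := by linarith
    have : u y0 ≤ r / 2 := hy0A.2
    linarith
  constructor
  · exact hEST τ ⟨hστ.le, le_rfl⟩ hxs.2 (fun t ht => (hclaim t ⟨ht.1, ht.2.le⟩).le)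
  · have hder_ae : ∀ᵐ s ∂volume.restrict (Ioc xs τ), -K ≤ u' s := by
      filter_upwards [ae_restrict_mem measurableSet_Ioc] with s hs
      have hsIcc : s ∈ Icc σ τ := ⟨le_trans hxs.1 hs.1.le, hs.2⟩
      exact hEST s hsIcc hs.1.le
        (fun t ht => (hclaim t ⟨ht.1, le_trans ht.2.le hs.2⟩).le)
    have hintle : -K * (τ - xs) ≤ ∫ s in xs..τ, u' s := by
      rw [integral_of_le hxs.2]
      have h1 : ∫ _ in Ioc xs τ, (-K) ≤ ∫ s in Ioc xs τ, u' s :=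
        integral_mono_ae (integrable_const _)
          (hu'int.mono_set (fun t ht => ⟨le_trans hxs.1 ht.1.le, ht.2⟩)) hder_ae
      rw [setIntegral_const, Real.volume_real_Ioc_of_le hxs.2, smul_eq_mul] at h1
      linarith
    have huτ : u τ - r = ∫ s in xs..τ, u' s := by
      rw [← huxs]
      exact hftc τ ⟨hστ.le, le_rfl⟩ hxs.2
    have hKy : K * (τ - xs) ≤ K * (τ - σ) :=
      mul_le_mul_of_nonneg_left (by linarith [hxs.1]) hK0
    have hgoal : r * (1 - θ * lam * B * Z * E * (τ - σ)) = r - K * (τ - σ) := by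
      rw [hKdef]; ring
    rw [ge_iff_le, hgoal]
    linarith


end
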